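/- Let f : ℝ^n → ℝ be differentiable with L-Lipschitz gradient, let z, λ ∈ ℝ^n, ρ > 0, and define g(x) = f(x) + ⟨λ, z − x⟩ + (ρ/2)‖z − x‖². If x⁺ is a stationary point of g (i.e., ∇f(x⁺) − λ + ρ(x⁺ − z) = 0), then for every x ∈ ℝ^n, g(x) − g(x⁺) ≥ ((ρ − L)/2)‖x − x⁺‖². -/

import Mathlib

open RealInnerProductSpace

theorem descent_aux {n : ℕ} (f : EuclideanSpace ℝ (Fin n) → ℝ) (L : ℝ)
    (hf : Differentiable ℝ f)
    (hlip : ∀ x₁ x₂ : EuclideanSpace ℝ (Fin n),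
      ‖gradient f x₁ - gradient f x₂‖ ≤ L * ‖x₁ - x₂‖)
    (x y : EuclideanSpace ℝ (Fin n)) :
    f x ≥ f y + ⟪gradient f y, x - y⟫ - L / 2 * ‖x - y‖ ^ 2 := by
  set v := x - y with hv
  have hinner : ∀ u t : EuclideanSpace ℝ (Fin n), fderiv ℝ f u t = ⟪gradient f u, t⟫ := by
    intro u t
    rw [((hf u).hasGradientAt.hasFDerivAt).fderiv]
    exact InnerProductSpace.toDual_apply_apply
  have hline : ∀ t : ℝ, HasDerivAt (fun s : ℝ => y + s • v) v t := by
    intro t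
    simpa using ((hasDerivAt_id t).smul_const v).const_add y
  have hd : ∀ t : ℝ, HasDerivAt (fun s : ℝ => f (y + s • v)) ⟪gradient f (y + t • v), v⟫ t := by
    intro t
    have h1 := ((hf (y + t • v)).hasFDerivAt).comp_hasDerivAt t (hline t)
    rw [← hinner]; exact h1
  set ψ : ℝ → ℝ := fun t => f (y + t • v) - t * ⟪gradient f y, v⟫ + L / 2 * t ^ 2 * ‖v‖ ^ 2 with hψ
  have hdψ : ∀ t : ℝ, HasDerivAt ψ
      (⟪gradient f (y + t • v), v⟫ - ⟪gradient f y, v⟫ + L * t * ‖v‖ ^ 2) t := by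
    intro t
    have h2 : HasDerivAt (fun s : ℝ => s * ⟪gradient f y, v⟫) ⟪gradient f y, v⟫ t := by
      simpa using (hasDerivAt_id t).mul_const ⟪gradient f y, v⟫
    have h3 : HasDerivAt (fun s : ℝ => L / 2 * s ^ 2 * ‖v‖ ^ 2) (L * t * ‖v‖ ^ 2) t := by
      have := ((hasDerivAt_pow 2 t).const_mul (L / 2)).mul_const (‖v‖ ^ 2)
      exact this.congr_deriv (by ring)
    exact ((hd t).sub h2).add h3
  have hmono : MonotoneOn ψ (Set.Icc 0 1) := by
    apply monotoneOn_of_deriv_nonneg (convex_Icc 0 1)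
    · exact Continuous.continuousOn (by
        exact continuous_iff_continuousAt.2 fun t => (hdψ t).continuousAt)
    · intro t ht
      exact ((hdψ t).differentiableAt).differentiableWithinAt
    · intro t ht
      rw [interior_Icc] at ht
      rw [(hdψ t).deriv]
      have hb : ⟪gradient f (y + t • v) - gradient f y, v⟫ ≥ -(L * t * ‖v‖ ^ 2) := by
        have h4 : |⟪gradient f (y + t • v) - gradient f y, v⟫| ≤ L * t * ‖v‖ ^ 2 := by
          calc |⟪gradient f (y + t • v) - gradient f y, v⟫|
              ≤ ‖gradient f (y + t • v) - gradient f y‖ * ‖v‖ := abs_real_inner_le_norm _ _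
            _ ≤ (L * ‖(y + t • v) - y‖) * ‖v‖ :=
                mul_le_mul_of_nonneg_right (hlip _ _) (norm_nonneg _)
            _ = L * t * ‖v‖ ^ 2 := by
                rw [add_sub_cancel_left, norm_smul, Real.norm_eq_abs,
                  abs_of_pos ht.1]
                ring
        linarith [neg_abs_le ⟪gradient f (y + t • v) - gradient f y, v⟫]
      have h5 := inner_sub_left (𝕜 := ℝ) (gradient f (y + t • v)) (gradient f y) v
      linarith [hb, h5]
    -- fallback
  have h01 := hmono (Set.left_mem_Icc.2 zero_le_one) (Set.right_mem_Icc.2 zero_le_one) zero_le_one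
  simp only [hψ, zero_smul, add_zero, one_smul, zero_mul, one_mul, one_pow] at h01
  have hx : y + v = x := by simp [hv]
  rw [hx] at h01
  linarith


/-- For `f` with `L`-Lipschitz gradient,
`g(x) = f(x) + ⟪λ, z − x⟫ + (ρ/2)‖z − x‖²`, and `x⁺` a stationary point of `g`
(i.e. `∇f(x⁺) − λ + ρ(x⁺ − z) = 0`), every `x` satisfies
`g(x) − g(x⁺) ≥ ((ρ − L)/2)‖x − x⁺‖²`. -/
theorem stmt_1 {n : ℕ} (f : EuclideanSpace ℝ (Fin n) → ℝ) (L ρ : ℝ) (hρ : 0 < ρ)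
    (hf : Differentiable ℝ f)
    (hlip : ∀ x₁ x₂ : EuclideanSpace ℝ (Fin n),
      ‖gradient f x₁ - gradient f x₂‖ ≤ L * ‖x₁ - x₂‖)
    (z lam xp : EuclideanSpace ℝ (Fin n))
    (g : EuclideanSpace ℝ (Fin n) → ℝ)
    (hg : ∀ x, g x = f x + ⟪lam, z - x⟫ + ρ / 2 * ‖z - x‖ ^ 2)
    (hstat : gradient f xp - lam + ρ • (xp - z) = 0) :
    ∀ x : EuclideanSpace ℝ (Fin n),
      g x - g xp ≥ (ρ - L) / 2 * ‖x - xp‖ ^ 2 := by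
  intro x
  have hgrad : gradient f xp = lam + ρ • (z - xp) := by
    have : gradient f xp = lam - ρ • (xp - z) := by
      rw [← sub_eq_zero]; rw [← hstat]; abel
    rw [this, smul_sub, smul_sub]; abel
  have hdesc := descent_aux f L hf hlip x xp
  rw [hgrad] at hdesc
  have hin : ⟪lam + ρ • (z - xp), x - xp⟫ = ⟪lam, x - xp⟫ + ρ * ⟪z - xp, x - xp⟫ := by
    rw [inner_add_left, real_inner_smul_left]
  have hnorm : ‖z - x‖ ^ 2 = ‖z - xp‖ ^ 2 - 2 * ⟪z - xp, x - xp⟫ + ‖x - xp‖ ^ 2 := by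
    have h1 : z - x = (z - xp) - (x - xp) := by abel
    rw [h1, norm_sub_sq_real]
  have e1 : ⟪lam, z - x⟫ = ⟪lam, z⟫ - ⟪lam, x⟫ := inner_sub_right _ _ _
  have e2 : ⟪lam, z - xp⟫ = ⟪lam, z⟫ - ⟪lam, xp⟫ := inner_sub_right _ _ _
  have e3 : ⟪lam, x - xp⟫ = ⟪lam, x⟫ - ⟪lam, xp⟫ := inner_sub_right _ _ _
  rw [hg x, hg xp]
  rw [hin, e3] at hdesc
  nlinarith [hdesc, hnorm, e1, e2]
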